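/- Let E = ([p]×[q]) \ {(i,j)} be the pattern missing a single entry. A partial real matrix M_E is completable to a p×q matrix of rank at most r if and only if (a) the submatrix missing row i (all observed) or the submatrix missing column j has rank at most r−1, or (b) the submatrices M_{î,:}, M_{:,ĵ}, and M_{î,ĵ} all have rank exactly r. -/

import Mathlib

open Matrix Submodule Module

namespace Stmt11Aux

variable {m n : Type*} [Fintype m] [Fintype n] [DecidableEq m] [DecidableEq n]

lemma rank_rows (N : Matrix m n ℝ) :
    N.rank = finrank ℝ (span ℝ (Set.range N)) := by
  rw [← Matrix.rank_transpose, Matrix.rank_eq_finrank_span_cols]; rfl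

lemma range_sub (N : Matrix m n ℝ) (i : m) :
    Set.range (N.submatrix (fun k : {k : m // k ≠ i} => (k : m)) id) = N '' {k | k ≠ i} := by
  rw [show N.submatrix (fun k : {k : m // k ≠ i} => (k : m)) id
      = N ∘ (fun k : {k : m // k ≠ i} => (k : m)) from rfl]
  exact (Set.range_comp _ _).trans (congrArg _ Subtype.range_coe_subtype)

lemma range_eq_insert (N : Matrix m n ℝ) (i : m) :
    Set.range N
      = insert (N i) (Set.range (N.submatrix (fun k : {k : m // k ≠ i} => (k : m)) id)) := by
  rw [range_sub]
  ext v
  simp only [Set.mem_range, Set.mem_insert_iff, Set.mem_image, Set.mem_setOf_eq]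
  constructor
  · rintro ⟨k, rfl⟩
    rcases eq_or_ne k i with rfl | h
    · exact Or.inl rfl
    · exact Or.inr ⟨k, h, rfl⟩
  · rintro (rfl | ⟨k, _, rfl⟩) <;> exact ⟨_, rfl⟩

lemma rank_del_le (N : Matrix m n ℝ) (i : m) :
    (N.submatrix (fun k : {k : m // k ≠ i} => (k : m)) id).rank ≤ N.rank := by
  rw [rank_rows, rank_rows]
  refine Submodule.finrank_mono (span_mono ?_)
  rw [range_sub]
  exact Set.image_subset_range _ _

lemma rank_le_del_add_one (N : Matrix m n ℝ) (i : m) :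
    N.rank ≤ (N.submatrix (fun k : {k : m // k ≠ i} => (k : m)) id).rank + 1 := by
  rw [rank_rows, rank_rows, range_eq_insert N i, span_insert]
  refine le_trans (Submodule.finrank_add_le_finrank_add_finrank _ _) ?_
  have h1 : finrank ℝ ↥(ℝ ∙ (N i)) ≤ 1 := by
    rcases eq_or_ne (N i) 0 with h | h
    · rw [h, Submodule.span_zero_singleton]; simp
    · rw [finrank_span_singleton h]
  omega

lemma rank_del_of_mem (N : Matrix m n ℝ) (i : m)
    (h : N i ∈ span ℝ (Set.range (N.submatrix (fun k : {k : m // k ≠ i} => (k : m)) id))) :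
    N.rank = (N.submatrix (fun k : {k : m // k ≠ i} => (k : m)) id).rank := by
  rw [rank_rows, rank_rows, range_eq_insert N i, span_insert_eq_span h]

lemma rank_del_of_not_mem (N : Matrix m n ℝ) (i : m)
    (h : N i ∉ span ℝ (Set.range (N.submatrix (fun k : {k : m // k ≠ i} => (k : m)) id))) :
    N.rank = (N.submatrix (fun k : {k : m // k ≠ i} => (k : m)) id).rank + 1 := by
  refine le_antisymm (rank_le_del_add_one N i) ?_
  rw [rank_rows, rank_rows]
  have hlt : span ℝ (Set.range (N.submatrix (fun k : {k : m // k ≠ i} => (k : m)) id))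
      < span ℝ (Set.range N) := by
    rw [range_eq_insert N i]
    refine lt_of_le_of_ne (span_mono (Set.subset_insert _ _)) fun he => ?_
    exact h (he ▸ subset_span (Set.mem_insert _ _))
  exact Submodule.finrank_lt_finrank_of_lt hlt

lemma rank_coldel_le (N : Matrix m n ℝ) (j : n) :
    (N.submatrix id (fun l : {l : n // l ≠ j} => (l : n))).rank ≤ N.rank := by
  rw [← Matrix.rank_transpose N, ← Matrix.rank_transpose (N.submatrix _ _),
    Matrix.transpose_submatrix]
  exact rank_del_le Nᵀ j

lemma rank_le_coldel_add_one (N : Matrix m n ℝ) (j : n) :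
    N.rank ≤ (N.submatrix id (fun l : {l : n // l ≠ j} => (l : n))).rank + 1 := by
  rw [← Matrix.rank_transpose N, ← Matrix.rank_transpose (N.submatrix _ _),
    Matrix.transpose_submatrix]
  exact rank_le_del_add_one Nᵀ j

lemma rank_coldel_of_mem (N : Matrix m n ℝ) (j : n)
    (h : Nᵀ j ∈ span ℝ (Set.range (Nᵀ.submatrix (fun l : {l : n // l ≠ j} => (l : n)) id))) :
    N.rank = (N.submatrix id (fun l : {l : n // l ≠ j} => (l : n))).rank := by
  rw [← Matrix.rank_transpose N, ← Matrix.rank_transpose (N.submatrix _ _),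
    Matrix.transpose_submatrix]
  exact rank_del_of_mem Nᵀ j h

lemma rank_coldel_of_not_mem (N : Matrix m n ℝ) (j : n)
    (h : Nᵀ j ∉ span ℝ (Set.range (Nᵀ.submatrix (fun l : {l : n // l ≠ j} => (l : n)) id))) :
    N.rank = (N.submatrix id (fun l : {l : n // l ≠ j} => (l : n))).rank + 1 := by
  rw [← Matrix.rank_transpose N, ← Matrix.rank_transpose (N.submatrix _ _),
    Matrix.transpose_submatrix]
  exact rank_del_of_not_mem Nᵀ j h

end Stmt11Aux

open Stmt11Aux in
theorem stmt11 {p q r : ℕ} (f : Fin p → Fin q → ℝ) (i : Fin p) (j : Fin q) :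
    (∃ M : Matrix (Fin p) (Fin q) ℝ, M.rank ≤ r ∧
        ∀ k l, (k, l) ≠ (i, j) → M k l = f k l) ↔
    (((Matrix.of f).submatrix (fun k : {k : Fin p // k ≠ i} => (k : Fin p)) id).rank < r ∨
     ((Matrix.of f).submatrix id (fun l : {l : Fin q // l ≠ j} => (l : Fin q))).rank < r) ∨
    (((Matrix.of f).submatrix (fun k : {k : Fin p // k ≠ i} => (k : Fin p)) id).rank = r ∧
     ((Matrix.of f).submatrix id (fun l : {l : Fin q // l ≠ j} => (l : Fin q))).rank = r ∧
     ((Matrix.of f).submatrix (fun k : {k : Fin p // k ≠ i} => (k : Fin p))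
        (fun l : {l : Fin q // l ≠ j} => (l : Fin q))).rank = r) := by
  classical
  constructor
  · rintro ⟨M, hMr, hM⟩
    have hMA : M.submatrix (fun k : {k : Fin p // k ≠ i} => (k : Fin p)) id
        = (Matrix.of f).submatrix (fun k : {k : Fin p // k ≠ i} => (k : Fin p)) id := by
      ext k l
      simp only [Matrix.submatrix_apply, Matrix.of_apply, id_eq]
      exact hM k.1 l (by simp [Prod.mk.injEq, k.2])
    have hMB : M.submatrix id (fun l : {l : Fin q // l ≠ j} => (l : Fin q))
        = (Matrix.of f).submatrix id (fun l : {l : Fin q // l ≠ j} => (l : Fin q)) := by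
      ext k l
      simp only [Matrix.submatrix_apply, Matrix.of_apply, id_eq]
      exact hM k l.1 (by simp [Prod.mk.injEq, l.2])
    have hA1 : ((Matrix.of f).submatrix (fun k : {k : Fin p // k ≠ i} => (k : Fin p)) id).rank
        ≤ r := by rw [← hMA]; exact le_trans (rank_del_le M i) hMr
    have hB1 : ((Matrix.of f).submatrix id (fun l : {l : Fin q // l ≠ j} => (l : Fin q))).rank
        ≤ r := by rw [← hMB]; exact le_trans (rank_coldel_le M j) hMr
    rcases lt_or_eq_of_le hA1 with hAlt | hAeq
    · exact Or.inl (Or.inl hAlt)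
    rcases lt_or_eq_of_le hB1 with hBlt | hBeq
    · exact Or.inl (Or.inr hBlt)
    refine Or.inr ⟨hAeq, hBeq, ?_⟩
    have hCle : ((Matrix.of f).submatrix (fun k : {k : Fin p // k ≠ i} => (k : Fin p))
        (fun l : {l : Fin q // l ≠ j} => (l : Fin q))).rank ≤ r := by
      have h1 := rank_coldel_le
        ((Matrix.of f).submatrix (fun k : {k : Fin p // k ≠ i} => (k : Fin p)) id) j
      exact le_trans h1 (le_of_eq hAeq)
    by_contra hCne
    have hClt : ((Matrix.of f).submatrix (fun k : {k : Fin p // k ≠ i} => (k : Fin p))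
        (fun l : {l : Fin q // l ≠ j} => (l : Fin q))).rank < r := lt_of_le_of_ne hCle hCne
    have hBi : ((Matrix.of f).submatrix id (fun l : {l : Fin q // l ≠ j} => (l : Fin q))) i
        ∉ span ℝ (Set.range
          (((Matrix.of f).submatrix id (fun l : {l : Fin q // l ≠ j} => (l : Fin q))).submatrix
            (fun k : {k : Fin p // k ≠ i} => (k : Fin p)) id)) := by
      intro hmem
      have h2 := rank_del_of_mem
        ((Matrix.of f).submatrix id (fun l : {l : Fin q // l ≠ j} => (l : Fin q))) i hmem
      have h3 : ((Matrix.of f).submatrix id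
          (fun l : {l : Fin q // l ≠ j} => (l : Fin q))).rank
          = ((Matrix.of f).submatrix (fun k : {k : Fin p // k ≠ i} => (k : Fin p))
            (fun l : {l : Fin q // l ≠ j} => (l : Fin q))).rank := h2
      rw [hBeq] at h3
      omega
    have hMi : M i ∉ span ℝ (Set.range
        (M.submatrix (fun k : {k : Fin p // k ≠ i} => (k : Fin p)) id)) := by
      intro hmem
      have h2 := Submodule.mem_map_of_mem
        (f := LinearMap.funLeft ℝ ℝ (fun l : {l : Fin q // l ≠ j} => (l : Fin q))) hmem
      rw [Submodule.map_span] at h2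
      erw [← Set.range_comp] at h2
      have e1 : (⇑(LinearMap.funLeft ℝ ℝ (fun l : {l : Fin q // l ≠ j} => (l : Fin q))))
          ∘ (M.submatrix (fun k : {k : Fin p // k ≠ i} => (k : Fin p)) id)
          = ((Matrix.of f).submatrix id
              (fun l : {l : Fin q // l ≠ j} => (l : Fin q))).submatrix
            (fun k : {k : Fin p // k ≠ i} => (k : Fin p)) id := by
        funext k l
        simp only [Function.comp_apply, LinearMap.funLeft_apply, Matrix.submatrix_apply,
          Matrix.of_apply, id_eq]
        exact hM k.1 l.1 (by simp [Prod.mk.injEq, k.2])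
      have e2 : (LinearMap.funLeft ℝ ℝ (fun l : {l : Fin q // l ≠ j} => (l : Fin q))) (M i)
          = ((Matrix.of f).submatrix id (fun l : {l : Fin q // l ≠ j} => (l : Fin q))) i := by
        funext l
        simp only [LinearMap.funLeft_apply, Matrix.submatrix_apply, Matrix.of_apply, id_eq]
        exact hM i l.1 (by simp [Prod.mk.injEq, l.2])
      rw [e1, e2] at h2
      exact hBi h2
    have h4 := rank_del_of_not_mem M i hMi
    rw [hMA, hAeq] at h4
    omega
  · rintro ((hlt | hlt) | ⟨hAeq, hBeq, hCeq⟩)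
    · refine ⟨Matrix.of fun k l => if (k, l) = (i, j) then 0 else f k l, ?_, ?_⟩
      · have he : (Matrix.of fun k l => if (k, l) = (i, j) then (0:ℝ) else f k l).submatrix
            (fun k : {k : Fin p // k ≠ i} => (k : Fin p)) id
            = (Matrix.of f).submatrix (fun k : {k : Fin p // k ≠ i} => (k : Fin p)) id := by
          ext k l
          simp only [Matrix.submatrix_apply, Matrix.of_apply, id_eq]
          exact if_neg (by simp [Prod.mk.injEq, k.2])
        have h1 := rank_le_del_add_one
          (Matrix.of fun k l => if (k, l) = (i, j) then (0:ℝ) else f k l) i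
        rw [he] at h1
        omega
      · intro k l h
        simp only [Matrix.of_apply]
        exact if_neg h
    · refine ⟨Matrix.of fun k l => if (k, l) = (i, j) then 0 else f k l, ?_, ?_⟩
      · have he : (Matrix.of fun k l => if (k, l) = (i, j) then (0:ℝ) else f k l).submatrix id
            (fun l : {l : Fin q // l ≠ j} => (l : Fin q))
            = (Matrix.of f).submatrix id (fun l : {l : Fin q // l ≠ j} => (l : Fin q)) := by
          ext k l
          simp only [Matrix.submatrix_apply, Matrix.of_apply, id_eq]
          exact if_neg (by simp [Prod.mk.injEq, l.2])
        have h1 := rank_le_coldel_add_one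
          (Matrix.of fun k l => if (k, l) = (i, j) then (0:ℝ) else f k l) j
        rw [he] at h1
        omega
      · intro k l h
        simp only [Matrix.of_apply]
        exact if_neg h
    · -- all ranks equal r
      have hmem : ((Matrix.of f).submatrix (fun k : {k : Fin p // k ≠ i} => (k : Fin p)) id)ᵀ j
          ∈ span ℝ (Set.range
            (((Matrix.of f).submatrix
                (fun k : {k : Fin p // k ≠ i} => (k : Fin p)) id)ᵀ.submatrix
              (fun l : {l : Fin q // l ≠ j} => (l : Fin q)) id)) := by
        by_contra hmem
        have h2 := rank_coldel_of_not_mem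
          ((Matrix.of f).submatrix (fun k : {k : Fin p // k ≠ i} => (k : Fin p)) id) j hmem
        have h3 : ((Matrix.of f).submatrix
            (fun k : {k : Fin p // k ≠ i} => (k : Fin p)) id).rank
            = ((Matrix.of f).submatrix (fun k : {k : Fin p // k ≠ i} => (k : Fin p))
              (fun l : {l : Fin q // l ≠ j} => (l : Fin q))).rank + 1 := h2
        rw [hAeq, hCeq] at h3
        omega
      obtain ⟨x, hx⟩ := (mem_span_range_iff_exists_fun ℝ).mp hmem
      have hx' : ∀ k : Fin p, k ≠ i →
          ∑ l : {l : Fin q // l ≠ j}, x l * f k l = f k j := by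
        intro k hk
        have h5 := congrFun hx ⟨k, hk⟩
        simpa [Finset.sum_apply] using h5
      set t : ℝ := ∑ l : {l : Fin q // l ≠ j}, x l * f i l with ht
      refine ⟨Matrix.of fun k l => if (k, l) = (i, j) then t else f k l, ?_, ?_⟩
      · have hmem' : (Matrix.of fun k l => if (k, l) = (i, j) then t else f k l)ᵀ j
            ∈ span ℝ (Set.range
              ((Matrix.of fun k l => if (k, l) = (i, j) then t else f k l)ᵀ.submatrix
                (fun l : {l : Fin q // l ≠ j} => (l : Fin q)) id)) := by
          refine (mem_span_range_iff_exists_fun ℝ).mpr ⟨x, ?_⟩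
          funext k
          simp only [Finset.sum_apply, Pi.smul_apply, smul_eq_mul, Matrix.transpose_apply,
            Matrix.submatrix_apply, Matrix.of_apply, id_eq]
          rcases eq_or_ne k i with rfl | hk
          · rw [if_pos rfl, ht]
            refine Finset.sum_congr rfl fun l _ => ?_
            rw [if_neg (by simp [Prod.mk.injEq, l.2])]
          · rw [if_neg (by simp [Prod.mk.injEq, hk])]
            rw [← hx' k hk]
            refine Finset.sum_congr rfl fun l _ => ?_
            rw [if_neg (by simp [Prod.mk.injEq, l.2])]
        have h6 := rank_coldel_of_mem
          (Matrix.of fun k l => if (k, l) = (i, j) then t else f k l) j hmem'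
        have he : (Matrix.of fun k l => if (k, l) = (i, j) then t else f k l).submatrix id
            (fun l : {l : Fin q // l ≠ j} => (l : Fin q))
            = (Matrix.of f).submatrix id (fun l : {l : Fin q // l ≠ j} => (l : Fin q)) := by
          ext k l
          simp only [Matrix.submatrix_apply, Matrix.of_apply, id_eq]
          exact if_neg (by simp [Prod.mk.injEq, l.2])
        rw [he, hBeq] at h6
        exact le_of_eq h6
      · intro k l h
        simp only [Matrix.of_apply]
        exact if_neg h
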